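/- Let 1 < α < 2 and t > 0. Then −cos(π/α) > 0, sin(π/(2α)) > √(−cos(π/α)), so that p := ( sin(π/(2α)) − √(−cos(π/α)) ) / ( 2 sin(π/(2α)) ) lies in (0,1); moreover, with this choice of p the density f = f_{α,p,t} satisfies f′( t √(−cos(π/α)) ) = 0, i.e. x = t √(−cos(π/α)) is a stationary point of f. -/

import Mathlib

open Real

/-- The mixture-of-asymmetric-Cauchy probability density `f_{α,p,t}`. -/
noncomputable def cauchyMixDensity (α p t x : ℝ) : ℝ :=
  (t * Real.cos (π / (2 * α)) / π) *
    ((x ^ 2 + t ^ 2 + 2 * (2 * p - 1) * x * t * Real.sin (π / (2 * α))) /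
      (x ^ 4 + t ^ 4 + 2 * x ^ 2 * t ^ 2 * Real.cos (π / α)))

/-- For `1 < α < 2` and `t > 0`: `−cos(π/α) > 0`,
`sin(π/(2α)) > √(−cos(π/α))`, so `p = (sin(π/(2α)) − √(−cos(π/α)))/(2 sin(π/(2α)))`
lies in `(0,1)`; moreover with this `p` the density `f_{α,p,t}` has a
stationary point at `x = t √(−cos(π/α))`. -/
theorem cauchyMix_stationary_point (α t : ℝ) (hα1 : 1 < α) (hα2 : α < 2)
    (ht : 0 < t) :
    0 < -Real.cos (π / α) ∧
    Real.sqrt (-Real.cos (π / α)) < Real.sin (π / (2 * α)) ∧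
    0 < (Real.sin (π / (2 * α)) - Real.sqrt (-Real.cos (π / α))) /
        (2 * Real.sin (π / (2 * α))) ∧
    (Real.sin (π / (2 * α)) - Real.sqrt (-Real.cos (π / α))) /
        (2 * Real.sin (π / (2 * α))) < 1 ∧
    deriv (cauchyMixDensity α
        ((Real.sin (π / (2 * α)) - Real.sqrt (-Real.cos (π / α))) /
          (2 * Real.sin (π / (2 * α)))) t)
      (t * Real.sqrt (-Real.cos (π / α))) = 0 := by
  have hα0 : (0:ℝ) < α := by linarith
  have hπ : (0:ℝ) < π := Real.pi_pos
  have hangle : π / α = 2 * (π / (2 * α)) := by field_simp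
  have hy1 : 0 < π / (2 * α) := by positivity
  have hy2 : π / (2 * α) < π / 2 := by
    rw [div_lt_div_iff₀ (by positivity) (by norm_num)]
    nlinarith
  have hπα1 : π / 2 < π / α := by
    rw [div_lt_div_iff₀ (by norm_num) hα0]
    nlinarith
  have hπα2 : π / α < π := by
    rw [div_lt_iff₀ hα0]
    nlinarith
  have hcneg : Real.cos (π / α) < 0 :=
    Real.cos_neg_of_pi_div_two_lt_of_lt hπα1 (by linarith)
  have hkpos : 0 < Real.cos (π / (2 * α)) :=
    Real.cos_pos_of_mem_Ioo ⟨by linarith, hy2⟩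
  have hspos : 0 < Real.sin (π / (2 * α)) :=
    Real.sin_pos_of_pos_of_lt_pi hy1 (by linarith)
  set s := Real.sin (π / (2 * α)) with hs_def
  set k := Real.cos (π / (2 * α)) with hk_def
  have hpyth : s ^ 2 + k ^ 2 = 1 := Real.sin_sq_add_cos_sq _
  have hc : Real.cos (π / α) = 1 - 2 * s ^ 2 := by
    rw [hangle, Real.cos_two_mul]
    nlinarith
  set u := Real.sqrt (-Real.cos (π / α)) with hu_def
  have hu2 : u ^ 2 = -Real.cos (π / α) := Real.sq_sqrt (by linarith)
  have hupos : 0 ≤ u := Real.sqrt_nonneg _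
  have hs2 : s ^ 2 < 1 := by nlinarith
  have hus : u < s := by
    rw [hu_def]
    exact (Real.sqrt_lt' hspos).2 (by nlinarith)
  have hcu : Real.cos (π / α) = -u ^ 2 := by linarith
  have hu1 : u ^ 2 < 1 := by nlinarith
  refine ⟨by linarith, hus, div_pos (by linarith) (by linarith),
    (div_lt_one (by linarith)).2 (by linarith), ?_⟩
  set p := (s - u) / (2 * s) with hp_def
  set x₀ := t * u with hx0_def
  have hs0 : s ≠ 0 := ne_of_gt hspos
  have hps : (2 * p - 1) * s = -u := by
    rw [hp_def]; field_simp; ring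
  have hD0 : x₀ ^ 4 + t ^ 4 + 2 * x₀ ^ 2 * t ^ 2 * Real.cos (π / α) ≠ 0 := by
    have he : x₀ ^ 4 + t ^ 4 + 2 * x₀ ^ 2 * t ^ 2 * Real.cos (π / α)
        = t ^ 4 * (1 - u ^ 4) := by
      rw [hx0_def, hcu]; ring
    rw [he]
    have : 0 < 1 - u ^ 4 := by nlinarith
    positivity
  have hN : HasDerivAt (fun x : ℝ => x ^ 2 + t ^ 2 + 2 * (2 * p - 1) * x * t * s) 0 x₀ := by
    have e : (fun x : ℝ => x ^ 2 + t ^ 2 + 2 * (2 * p - 1) * x * t * s)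
        = fun x : ℝ => x ^ 2 + t ^ 2 + 2 * (2 * p - 1) * t * s * x := by
      funext x; ring
    rw [e]
    have h := ((hasDerivAt_pow 2 x₀).add_const (t ^ 2)).add
        ((hasDerivAt_id x₀).const_mul (2 * (2 * p - 1) * t * s))
    refine h.congr_deriv (Eq.symm ?_)
    push_cast
    rw [hx0_def]
    linear_combination (-2 : ℝ) * t * hps
  have hD : HasDerivAt
      (fun x : ℝ => x ^ 4 + t ^ 4 + 2 * x ^ 2 * t ^ 2 * Real.cos (π / α)) 0 x₀ := by
    have e : (fun x : ℝ => x ^ 4 + t ^ 4 + 2 * x ^ 2 * t ^ 2 * Real.cos (π / α))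
        = fun x : ℝ => x ^ 4 + t ^ 4 + 2 * t ^ 2 * Real.cos (π / α) * x ^ 2 := by
      funext x; ring
    rw [e]
    have h := ((hasDerivAt_pow 4 x₀).add_const (t ^ 4)).add
        ((hasDerivAt_pow 2 x₀).const_mul (2 * t ^ 2 * Real.cos (π / α)))
    refine h.congr_deriv (Eq.symm ?_)
    push_cast
    rw [hx0_def, hcu]
    ring
  have hdiv := (hN.div hD hD0).const_mul (t * k / π)
  have hfun : cauchyMixDensity α p t =
      fun x : ℝ => (t * k / π) *
        ((x ^ 2 + t ^ 2 + 2 * (2 * p - 1) * x * t * s) /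
          (x ^ 4 + t ^ 4 + 2 * x ^ 2 * t ^ 2 * Real.cos (π / α))) := by
    funext x
    rw [cauchyMixDensity, hs_def, hk_def]
  have key : HasDerivAt (cauchyMixDensity α p t) 0 x₀ := by
    rw [hfun]
    refine hdiv.congr_deriv (Eq.symm ?_)
    simp
  exact key.deriv
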